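/- For every M ∈ (0, 1/27), the level set C_M = {(x,y,z) ∈ Δ² : x y z = M} is nonempty, compact and connected, and P(p) ≠ (0,0,0) for every p ∈ C_M (i.e. C_M contains no stationary point of P). -/

import Mathlib

open Filter Set Topology

noncomputable section

/-- The rock–paper–scissors vector field `P` on `ℝ³`, with components
`P₁(x,y,z) = x(z-y)/2`, `P₂(x,y,z) = y(x-z)/2`, `P₃(x,y,z) = z(y-x)/2`. -/
def Pfield : ℝ × ℝ × ℝ → ℝ × ℝ × ℝ :=
  fun p => (p.1 * (p.2.2 - p.2.1) / 2, p.2.1 * (p.1 - p.2.2) / 2, p.2.2 * (p.2.1 - p.1) / 2)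

/-- The simplex `Δ² = {(x,y,z) : x,y,z ≥ 0, x+y+z = 1}`. -/
def simplex2 : Set (ℝ × ℝ × ℝ) :=
  {p | 0 ≤ p.1 ∧ 0 ≤ p.2.1 ∧ 0 ≤ p.2.2 ∧ p.1 + p.2.1 + p.2.2 = 1}

namespace RPSaux

def hh (x : ℝ) : ℝ := x * (1 - x)^2

lemma hh_cont : Continuous hh := by unfold hh; fun_prop

lemma hh_hasDeriv (x : ℝ) : HasDerivAt hh ((1-x)*(1-3*x)) x := by
  have h : HasDerivAt (fun x : ℝ => x * (1 - x)^2)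
      (1 * (1-x)^2 + x * (↑2 * (1 - x) ^ (2-1) * -1)) x :=
    (hasDerivAt_id x).mul (((hasDerivAt_id x).const_sub 1).pow 2)
  convert h using 1
  · rfl
  push_cast
  ring

lemma hh_mono : StrictMonoOn hh (Icc (0:ℝ) (1/3)) := by
  apply strictMonoOn_of_deriv_pos (convex_Icc _ _) hh_cont.continuousOn
  intro x hx
  rw [interior_Icc] at hx
  rw [(hh_hasDeriv x).deriv]
  nlinarith [hx.1, hx.2]

lemma hh_anti : StrictAntiOn hh (Icc (1/3:ℝ) 1) := by
  apply strictAntiOn_of_deriv_neg (convex_Icc _ _) hh_cont.continuousOn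
  intro x hx
  rw [interior_Icc] at hx
  rw [(hh_hasDeriv x).deriv]
  nlinarith [hx.1, hx.2]

def sfun (M x : ℝ) : ℝ := Real.sqrt ((1-x)^2 - 4*M/x)

def fplus (M x : ℝ) : ℝ × ℝ × ℝ := (x, ((1-x) + sfun M x)/2, ((1-x) - sfun M x)/2)

def fminus (M x : ℝ) : ℝ × ℝ × ℝ := (x, ((1-x) - sfun M x)/2, ((1-x) + sfun M x)/2)

def Iset (M : ℝ) : Set ℝ := {x | x ∈ Icc (0:ℝ) 1 ∧ 4*M ≤ hh x}

lemma Iset_pos {M x : ℝ} (hM0 : 0 < M) (hx : x ∈ Iset M) : 0 < x := by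
  rcases hx with ⟨⟨h0, h1⟩, hhx⟩
  rcases h0.lt_or_eq with h | h
  · exact h
  · exfalso; rw [← h] at hhx; simp [hh] at hhx; linarith

lemma Iset_d_nonneg {M x : ℝ} (hM0 : 0 < M) (hx : x ∈ Iset M) :
    0 ≤ (1-x)^2 - 4*M/x := by
  have hx0 := Iset_pos hM0 hx
  rcases hx with ⟨⟨h0, h1⟩, hhx⟩
  rw [sub_nonneg, div_le_iff₀ hx0]
  unfold hh at hhx
  nlinarith

lemma sfun_sq {M x : ℝ} (hM0 : 0 < M) (hx : x ∈ Iset M) :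
    (sfun M x)^2 = (1-x)^2 - 4*M/x :=
  Real.sq_sqrt (Iset_d_nonneg hM0 hx)

lemma sfun_le {M x : ℝ} (hM0 : 0 < M) (hx : x ∈ Iset M) : sfun M x ≤ 1 - x := by
  have hx0 := Iset_pos hM0 hx
  have h1 : x ≤ 1 := hx.1.2
  have hle : (1-x)^2 - 4*M/x ≤ (1-x)^2 := by
    have : 0 < 4*M/x := by positivity
    linarith
  calc sfun M x ≤ Real.sqrt ((1-x)^2) := Real.sqrt_le_sqrt hle
    _ = 1 - x := by rw [Real.sqrt_sq (by linarith)]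

lemma third_mem {M : ℝ} (hM : M < 1/27) : (1/3 : ℝ) ∈ Iset M := by
  refine ⟨⟨by norm_num, by norm_num⟩, ?_⟩
  unfold hh; norm_num; linarith

lemma Iset_preconnected {M : ℝ} : IsPreconnected (Iset M) := by
  apply Set.OrdConnected.isPreconnected
  constructor
  intro a ha b hb z hz
  have hz0 : (0:ℝ) ≤ z := le_trans ha.1.1 hz.1
  have hz1 : z ≤ 1 := le_trans hz.2 hb.1.2
  refine ⟨⟨hz0, hz1⟩, ?_⟩
  rcases le_or_gt z (1/3) with h | h
  · have := hh_mono.monotoneOn ⟨ha.1.1, le_trans hz.1 h⟩ ⟨hz0, h⟩ hz.1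
    linarith [ha.2]
  · have := hh_anti.antitoneOn ⟨h.le, hz1⟩ ⟨le_trans h.le hz.2, hb.1.2⟩ hz.2
    linarith [hb.2]

lemma Iset_connected {M : ℝ} (hM : M < 1/27) : IsConnected (Iset M) :=
  ⟨⟨1/3, third_mem hM⟩, Iset_preconnected⟩

lemma sfun_contOn {M : ℝ} (hM0 : 0 < M) : ContinuousOn (sfun M) (Iset M) := by
  apply Real.continuous_sqrt.comp_continuousOn
  apply ContinuousOn.sub (by fun_prop)
  exact continuousOn_const.div continuousOn_id fun x hx => (Iset_pos hM0 hx).ne'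

lemma fplus_contOn {M : ℝ} (hM0 : 0 < M) : ContinuousOn (fplus M) (Iset M) := by
  unfold fplus
  exact (continuousOn_id).prodMk
    (((((continuousOn_const.sub continuousOn_id)).add (sfun_contOn hM0)).div_const 2).prodMk
     ((((continuousOn_const.sub continuousOn_id)).sub (sfun_contOn hM0)).div_const 2))

lemma fminus_contOn {M : ℝ} (hM0 : 0 < M) : ContinuousOn (fminus M) (Iset M) := by
  unfold fminus
  exact (continuousOn_id).prodMk
    (((((continuousOn_const.sub continuousOn_id)).sub (sfun_contOn hM0)).div_const 2).prodMk
     ((((continuousOn_const.sub continuousOn_id)).add (sfun_contOn hM0)).div_const 2))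

def CM (M : ℝ) : Set (ℝ × ℝ × ℝ) := {p ∈ simplex2 | p.1 * p.2.1 * p.2.2 = M}

lemma fplus_mem {M x : ℝ} (hM0 : 0 < M) (hx : x ∈ Iset M) : fplus M x ∈ CM M := by
  have hx0 := Iset_pos hM0 hx
  have hs0 : 0 ≤ sfun M x := Real.sqrt_nonneg _
  have hs1 := sfun_le hM0 hx
  have hs2 := sfun_sq hM0 hx
  refine ⟨⟨hx0.le, by simp [fplus]; linarith, by simp [fplus]; linarith, ?_⟩, ?_⟩
  · show x + ((1-x) + sfun M x)/2 + ((1-x) - sfun M x)/2 = 1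
    ring
  · show x * (((1-x) + sfun M x)/2) * (((1-x) - sfun M x)/2) = M
    have hs2' : (sfun M x)^2 * x = (1-x)^2 * x - 4*M := by
      field_simp at hs2; linarith [hs2]
    field_simp
    nlinarith [hs2']

lemma fminus_mem {M x : ℝ} (hM0 : 0 < M) (hx : x ∈ Iset M) : fminus M x ∈ CM M := by
  have hx0 := Iset_pos hM0 hx
  have hs0 : 0 ≤ sfun M x := Real.sqrt_nonneg _
  have hs1 := sfun_le hM0 hx
  have hs2 := sfun_sq hM0 hx
  refine ⟨⟨hx0.le, by simp [fminus]; linarith, by simp [fminus]; linarith, ?_⟩, ?_⟩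
  · show x + ((1-x) - sfun M x)/2 + ((1-x) + sfun M x)/2 = 1
    ring
  · show x * (((1-x) - sfun M x)/2) * (((1-x) + sfun M x)/2) = M
    have hs2' : (sfun M x)^2 * x = (1-x)^2 * x - 4*M := by
      field_simp at hs2; linarith [hs2]
    field_simp
    nlinarith [hs2']

lemma CM_eq {M : ℝ} (hM0 : 0 < M) : CM M = fplus M '' Iset M ∪ fminus M '' Iset M := by
  ext ⟨x, y, z⟩
  constructor
  · rintro ⟨⟨hx0, hy0, hz0, hsum⟩, hprod⟩
    dsimp only at hx0 hy0 hz0 hsum hprod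
    have hx : 0 < x := by
      rcases hx0.lt_or_eq with h | h
      · exact h
      · exfalso; rw [← h] at hprod; simp at hprod; nlinarith
    have hd : (1-x)^2 - 4*M/x = (y-z)^2 := by
      have h1 : 1 - x = y + z := by linarith
      have h2 : M / x = y * z := by
        rw [div_eq_iff hx.ne']; linarith [hprod]
      rw [h1]
      have h3 : 4*M/x = 4*(M/x) := by ring
      rw [h3, h2]; ring
    have hxI : x ∈ Iset M := by
      refine ⟨⟨hx0, by linarith⟩, ?_⟩
      unfold hh
      have h4 : x * ((1-x)^2 - 4*M/x) = x*(1-x)^2 - 4*M := by field_simp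
      nlinarith [mul_nonneg hx.le (hd ▸ sq_nonneg (y-z))]
    have habs : sfun M x = |y - z| := by
      rw [sfun, hd, Real.sqrt_sq_eq_abs]
    rcases le_total z y with h | h
    · left
      refine ⟨x, hxI, ?_⟩
      have hs : sfun M x = y - z := by rw [habs, abs_of_nonneg (by linarith)]
      simp only [fplus, hs, Prod.mk.injEq]
      refine ⟨trivial, by linarith, by linarith⟩
    · right
      refine ⟨x, hxI, ?_⟩
      have hs : sfun M x = z - y := by rw [habs, abs_of_nonpos (by linarith), neg_sub]
      simp only [fminus, hs, Prod.mk.injEq]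
      refine ⟨trivial, by linarith, by linarith⟩
  · rintro (⟨w, hw, hEq⟩ | ⟨w, hw, hEq⟩)
    · rw [← hEq]; exact fplus_mem hM0 hw
    · rw [← hEq]; exact fminus_mem hM0 hw

lemma exists_touch {M : ℝ} (hM0 : 0 < M) (hM : M < 1/27) :
    ∃ a, a ∈ Iset M ∧ sfun M a = 0 := by
  have hiv : Ioo (hh 0) (hh (1/3)) ⊆ hh '' Ioo 0 (1/3) :=
    intermediate_value_Ioo (by norm_num) hh_cont.continuousOn
  have hmem : (4*M) ∈ Ioo (hh 0) (hh (1/3)) := by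
    refine ⟨by simp [hh]; linarith, by simp [hh]; nlinarith⟩
  obtain ⟨a, ha, hha⟩ := hiv hmem
  have ha0 : 0 < a := ha.1
  refine ⟨a, ⟨⟨ha0.le, by linarith [ha.2]⟩, by linarith [hha.ge]⟩, ?_⟩
  unfold sfun
  have hz : (1-a)^2 - 4*M/a = 0 := by
    unfold hh at hha
    field_simp
    nlinarith [hha]
  rw [hz, Real.sqrt_zero]

end RPSaux

open RPSaux in
/-- For `M ∈ (0, 1/27)`, the level set `C_M = {(x,y,z) ∈ Δ² : xyz = M}` is nonempty,
compact and connected, and contains no stationary point of `P`. -/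
theorem rps_level_set_properties (M : ℝ) (hM0 : 0 < M) (hM : M < 1/27) :
    ({p ∈ simplex2 | p.1 * p.2.1 * p.2.2 = M}).Nonempty ∧
    IsCompact {p ∈ simplex2 | p.1 * p.2.1 * p.2.2 = M} ∧
    IsConnected {p ∈ simplex2 | p.1 * p.2.1 * p.2.2 = M} ∧
    ∀ p ∈ {p ∈ simplex2 | p.1 * p.2.1 * p.2.2 = M}, Pfield p ≠ (0, 0, 0) := by
  have hCM : {p ∈ simplex2 | p.1 * p.2.1 * p.2.2 = M} = CM M := rfl
  refine ⟨?_, ?_, ?_, ?_⟩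
  · exact ⟨fplus M (1/3), hCM ▸ fplus_mem hM0 (third_mem hM)⟩
  · have hclosed : IsClosed (CM M) := by
      have h1 : IsClosed simplex2 := by
        have h2 : simplex2 = {p : ℝ×ℝ×ℝ | 0 ≤ p.1} ∩ ({p | 0 ≤ p.2.1} ∩ ({p | 0 ≤ p.2.2} ∩
            {p | p.1 + p.2.1 + p.2.2 = 1})) := by
          ext p; simp only [simplex2, mem_setOf_eq, mem_inter_iff]
        rw [h2]
        exact (isClosed_le continuous_const continuous_fst).inter
          ((isClosed_le continuous_const (continuous_fst.comp continuous_snd)).inter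
           ((isClosed_le continuous_const (continuous_snd.comp continuous_snd)).inter
            (isClosed_eq (by fun_prop) continuous_const)))
      exact h1.inter (isClosed_eq (by fun_prop) continuous_const)
    have hsub : CM M ⊆ Icc ((0:ℝ), (0:ℝ), (0:ℝ)) (1, 1, 1) := by
      rintro ⟨x, y, z⟩ ⟨⟨hx, hy, hz, hsum⟩, _⟩
      dsimp only at hx hy hz hsum
      simp only [mem_Icc, Prod.le_def]
      exact ⟨⟨hx, hy, hz⟩, ⟨by linarith, by linarith, by linarith⟩⟩
    exact hCM ▸ isCompact_Icc.of_isClosed_subset hclosed hsub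
  · rw [hCM, CM_eq hM0]
    obtain ⟨a, haI, hsa⟩ := exists_touch hM0 hM
    have hpt : fplus M a = fminus M a := by simp [fplus, fminus, hsa]
    apply IsConnected.union
    · exact ⟨fplus M a, ⟨a, haI, rfl⟩, ⟨a, haI, hpt.symm⟩⟩
    · exact (Iset_connected hM).image _ (fplus_contOn hM0)
    · exact (Iset_connected hM).image _ (fminus_contOn hM0)
  · rintro ⟨x, y, z⟩ ⟨⟨hx0, hy0, hz0, hsum⟩, hprod⟩ hP
    dsimp only at hx0 hy0 hz0 hsum hprod
    simp only [Pfield, Prod.mk.injEq] at hP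
    obtain ⟨h1, h2, h3⟩ := hP
    have hx : 0 < x := by
      rcases hx0.lt_or_eq with h | h
      · exact h
      · exfalso; rw [← h] at hprod; simp at hprod; nlinarith
    have hy : 0 < y := by
      rcases hy0.lt_or_eq with h | h
      · exact h
      · exfalso; rw [← h] at hprod; simp at hprod; nlinarith
    have hz : 0 < z := by
      rcases hz0.lt_or_eq with h | h
      · exact h
      · exfalso; rw [← h] at hprod; simp at hprod; nlinarith
    have e1 : z = y := by
      have h4 : x * (z - y) = 0 := by linarith
      rcases mul_eq_zero.1 h4 with h | h
      · exact absurd h hx.ne'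
      · linarith
    have e2 : x = z := by
      have h4 : y * (x - z) = 0 := by linarith
      rcases mul_eq_zero.1 h4 with h | h
      · exact absurd h hy.ne'
      · linarith
    have hx3 : x = 1/3 := by linarith
    have hy3 : y = 1/3 := by linarith
    have hz3 : z = 1/3 := by linarith
    rw [hx3, hy3, hz3] at hprod
    norm_num at hprod
    linarith
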